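/- Let g be a 2-dimensional restricted Lie algebra over an algebraically closed field of characteristic p > 0. If g possesses at least two distinct lines of additive type (i.e., two linearly independent elements v with v^[p] = 0), and g is one of the five types in the standard classification of 2-dimensional restricted Lie algebras, then g is abelian with identically zero p-power map; in particular every line of g is p-closed of additive type. -/

import Mathlib

/-- Auxiliary: if `Z * Y - Y * Z = Y` and `Z ^ p = 0` in a ring of
characteristic `p`, then `Y = 0`. -/
lemma stmt3_aux {p : ℕ} [Fact p.Prime] {A : Type*} [Ring A] [CharP A p]
    (Z Y : A) (h : Z * Y - Y * Z = Y) (hZ : Z ^ p = 0) : Y = 0 := by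
  have hZY : Z * Y = Y * (Z + 1) := by
    rw [mul_add, mul_one, sub_eq_iff_eq_add.mp h]
    exact add_comm _ _
  have key : ∀ n, Z ^ n * Y = Y * (Z + 1) ^ n := by
    intro n
    induction n with
    | zero => simp
    | succ n ih =>
      rw [pow_succ', mul_assoc, ih, ← mul_assoc, hZY, mul_assoc, ← pow_succ']
  have h1 : (Z + 1) ^ p = Z ^ p + 1 := by
    have := add_pow_char_of_commute p (Commute.one_right Z)
    simpa using this
  have := key p
  rw [hZ, zero_mul, h1, hZ, zero_add, mul_one] at this
  exact this.symm

/-- If a 2-dimensional restricted Lie algebra (one of the five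
standard types) has two distinct lines of additive type (two linearly
independent elements killed by the p-power map `P`), then it is abelian with
identically zero p-power map; in particular every line is p-closed of
additive type.  The restricted structure is encoded by a faithful embedding
into an associative algebra. -/
theorem stmt_3 {k : Type*} [Field k] [IsAlgClosed k] {p : ℕ} (hp : p.Prime) [CharP k p]
    {L : Type*} [LieRing L] [LieAlgebra k L] (P : L → L)
    (A : Type*) [Ring A] [Algebra k A] (ι : L →ₗ[k] A)
    (hinj : Function.Injective ι)
    (hbrk : ∀ v w : L, ι ⁅v, w⁆ = ι v * ι w - ι w * ι v)
    (hpow : ∀ v : L, ι (P v) = ι v ^ p)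
    (hclass : ∃ x y : L, LinearIndependent k ![x, y] ∧
      Submodule.span k ({x, y} : Set L) = ⊤ ∧
      ((⁅x, y⁆ = y ∧ P x = x ∧ P y = 0) ∨
       (⁅x, y⁆ = 0 ∧ P x = 0 ∧ P y = 0) ∨
       (⁅x, y⁆ = 0 ∧ P x = x ∧ P y = 0) ∨
       (⁅x, y⁆ = 0 ∧ P x = y ∧ P y = 0) ∨
       (⁅x, y⁆ = 0 ∧ P x = x ∧ P y = y)))
    (v w : L) (hvw : LinearIndependent k ![v, w])
    (hv : P v = 0) (hw : P w = 0) :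
    (∀ a b : L, ⁅a, b⁆ = 0) ∧ (∀ u : L, P u = 0) := by
  haveI : Fact p.Prime := ⟨hp⟩
  have hppos : p ≠ 0 := hp.ne_zero
  obtain ⟨x, y, hxy, hspan, hcase⟩ := hclass
  have hxne : x ≠ 0 := by have := hxy.ne_zero 0; simpa using this
  have hyne : y ≠ 0 := by have := hxy.ne_zero 1; simpa using this
  have hvne : v ≠ 0 := by have := hvw.ne_zero 0; simpa using this
  have hwne : w ≠ 0 := by have := hvw.ne_zero 1; simpa using this
  -- A is nontrivial of characteristic p
  haveI : Nontrivial A := by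
    refine nontrivial_of_ne (ι v) 0 ?_
    intro h
    exact hvne (hinj (by simpa using h))
  haveI : CharP A p := charP_of_injective_algebraMap' k (A := A) p
  -- coordinates of v and w
  have hvmem : v ∈ Submodule.span k ({x, y} : Set L) := by rw [hspan]; trivial
  have hwmem : w ∈ Submodule.span k ({x, y} : Set L) := by rw [hspan]; trivial
  obtain ⟨a, b, hab⟩ := Submodule.mem_span_pair.mp hvmem
  obtain ⟨c, d, hcd⟩ := Submodule.mem_span_pair.mp hwmem
  -- if both v and w lie in the line spanned by y, contradiction
  have hliney : ¬ (a = 0 ∧ c = 0) := by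
    rintro ⟨ha0, hc0⟩
    have hvb : v = b • y := by rw [← hab, ha0]; simp
    have hwd : w = d • y := by rw [← hcd, hc0]; simp
    have hbne : b ≠ 0 := by
      intro hb0; apply hvne; rw [hvb, hb0, zero_smul]
    have h0 : d • v + (-b) • w = 0 := by
      rw [hvb, hwd, smul_smul, smul_smul]; ring_nf; module
    obtain ⟨-, h2⟩ := (LinearIndependent.pair_iff.mp hvw) d (-b) h0
    exact hbne (by simpa using h2)
  -- pth power of ι v, ι w
  have hιv : ι v = a • ι x + b • ι y := by rw [← hab]; simp
  have hιw : ι w = c • ι x + d • ι y := by rw [← hcd]; simp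
  have hvp0 : (ι v) ^ p = 0 := by rw [← hpow, hv, map_zero]
  have hwp0 : (ι w) ^ p = 0 := by rw [← hpow, hw, map_zero]
  rcases hcase with ⟨hb1, hx1, hy1⟩ | ⟨hb1, hx1, hy1⟩ | ⟨hb1, hx1, hy1⟩ |
    ⟨hb1, hx1, hy1⟩ | ⟨hb1, hx1, hy1⟩
  · -- case 1: nonabelian, impossible
    exfalso
    have hyA : ι y ≠ 0 := fun h => hyne (hinj (by simpa using h))
    have key : ∀ (z : L) (α β : k), z = α • x + β • y → ι z ^ p = 0 → α = 0 := by
      intro z α β hz hzp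
      by_contra hα
      apply hyA
      have hbz : ⁅z, y⁆ = α • y := by
        rw [hz, add_lie, smul_lie, smul_lie, hb1, lie_self, smul_zero, add_zero]
      have hZY : ι z * ι y - ι y * ι z = α • ι y := by
        rw [← hbrk, hbz, map_smul]
      refine stmt3_aux (p := p) (α⁻¹ • ι z) (ι y) ?_ ?_
      · rw [smul_mul_assoc, mul_smul_comm, ← smul_sub, hZY, smul_smul,
          inv_mul_cancel₀ hα, one_smul]
      · rw [smul_pow, hzp, smul_zero]
    exact hliney ⟨key v a b hab.symm hvp0, key w c d hcd.symm hwp0⟩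
  · -- case 2: abelian with zero p-map, the good case
    have habel : ∀ a b : L, ⁅a, b⁆ = 0 := by
      intro u z
      have humem : u ∈ Submodule.span k ({x, y} : Set L) := by rw [hspan]; trivial
      have hzmem : z ∈ Submodule.span k ({x, y} : Set L) := by rw [hspan]; trivial
      obtain ⟨α, β, hu⟩ := Submodule.mem_span_pair.mp humem
      obtain ⟨γ, δ, hz⟩ := Submodule.mem_span_pair.mp hzmem
      rw [← hu, ← hz]
      have hyx : ⁅y, x⁆ = 0 := by rw [← lie_skew, hb1, neg_zero]
      simp [add_lie, lie_add, lie_smul, smul_lie, hb1, hyx]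
    refine ⟨habel, fun u => ?_⟩
    have humem : u ∈ Submodule.span k ({x, y} : Set L) := by rw [hspan]; trivial
    obtain ⟨α, β, hu⟩ := Submodule.mem_span_pair.mp humem
    have hcomm : Commute (ι x) (ι y) := by
      have := hbrk x y
      rw [hb1, map_zero] at this
      exact sub_eq_zero.mp this.symm
    have hxp : (ι x) ^ p = 0 := by rw [← hpow, hx1, map_zero]
    have hyp : (ι y) ^ p = 0 := by rw [← hpow, hy1, map_zero]
    apply hinj
    rw [hpow, map_zero, ← hu]
    have : ι (α • x + β • y) = α • ι x + β • ι y := by simp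
    rw [this, add_pow_char_of_commute p ((hcomm.smul_left α).smul_right β),
      smul_pow, smul_pow, hxp, hyp, smul_zero, smul_zero, add_zero]
  · -- case 3
    exfalso
    have hcomm : Commute (ι x) (ι y) := by
      have := hbrk x y
      rw [hb1, map_zero] at this
      exact sub_eq_zero.mp this.symm
    have hxp : (ι x) ^ p = ι x := by rw [← hpow, hx1]
    have hyp : (ι y) ^ p = 0 := by rw [← hpow, hy1, map_zero]
    have key : ∀ (z : L) (α β : k), ι z = α • ι x + β • ι y → ι z ^ p = 0 → α = 0 := by
      intro z α β hz hzp
      rw [hz, add_pow_char_of_commute p ((hcomm.smul_left α).smul_right β),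
        smul_pow, smul_pow, hxp, hyp, smul_zero, add_zero] at hzp
      have : (α ^ p) • x = 0 := by
        apply hinj; rw [map_smul, map_zero, hzp]
      rcases smul_eq_zero.mp this with h | h
      · exact pow_eq_zero_iff hppos |>.mp h
      · exact absurd h hxne
    exact hliney ⟨key v a b hιv hvp0, key w c d hιw hwp0⟩
  · -- case 4
    exfalso
    have hcomm : Commute (ι x) (ι y) := by
      have := hbrk x y
      rw [hb1, map_zero] at this
      exact sub_eq_zero.mp this.symm
    have hxp : (ι x) ^ p = ι y := by rw [← hpow, hx1]
    have hyp : (ι y) ^ p = 0 := by rw [← hpow, hy1, map_zero]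
    have key : ∀ (z : L) (α β : k), ι z = α • ι x + β • ι y → ι z ^ p = 0 → α = 0 := by
      intro z α β hz hzp
      rw [hz, add_pow_char_of_commute p ((hcomm.smul_left α).smul_right β),
        smul_pow, smul_pow, hxp, hyp, smul_zero, add_zero] at hzp
      have : (α ^ p) • y = 0 := by
        apply hinj; rw [map_smul, map_zero, hzp]
      rcases smul_eq_zero.mp this with h | h
      · exact pow_eq_zero_iff hppos |>.mp h
      · exact absurd h hyne
    exact hliney ⟨key v a b hιv hvp0, key w c d hιw hwp0⟩
  · -- case 5
    exfalso
    have hcomm : Commute (ι x) (ι y) := by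
      have := hbrk x y
      rw [hb1, map_zero] at this
      exact sub_eq_zero.mp this.symm
    have hxp : (ι x) ^ p = ι x := by rw [← hpow, hx1]
    have hyp : (ι y) ^ p = ι y := by rw [← hpow, hy1]
    have hzp : ι v ^ p = 0 := hvp0
    rw [hιv, add_pow_char_of_commute p ((hcomm.smul_left a).smul_right b),
      smul_pow, smul_pow, hxp, hyp] at hzp
    have h0 : (a ^ p) • x + (b ^ p) • y = 0 := by
      apply hinj; rw [map_add, map_smul, map_smul, map_zero, hzp]
    obtain ⟨h1, h2⟩ := (LinearIndependent.pair_iff.mp hxy) (a ^ p) (b ^ p) h0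
    apply hvne
    rw [← hab, pow_eq_zero_iff hppos |>.mp h1, pow_eq_zero_iff hppos |>.mp h2,
      zero_smul, zero_smul, add_zero]
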